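/- Assume the Ornstein-Uhlenbeck hypotheses: Q, B : ℝ → ℝ^{N×N} with entries q_{ij} ∈ C_b^1(ℝ), b_{ij} ∈ C_b(ℝ), Q(s) symmetric with ⟨Q(s)ξ, ξ⟩ ≥ η₀|ξ|² for some η₀ > 0, and the evolution matrices U(s,r) (solving D_s U(s,r) = B(s)U(s,r), U(r,r) = I) satisfy ‖U(r,s)‖ ≤ C₀ e^{-ω(s-r)} for all s ≥ r and some C₀, ω > 0. Let Q_s = ∫_s^{+∞} U(s,ξ) Q(ξ) U(s,ξ)* dξ. Fix p ∈ (1,+∞) and define V_O(s,x) = (1/(2p))(1 − 1/p) ⟨Q(s) Q_s^{-1} x, Q_s^{-1} x⟩ − (1/(2p)) Tr(Q(s) Q_s^{-1}). Then there exist constants k₁ = k₁(p) > 0 and k₀ ≥ 0 such that V_O(s,x) ≥ k₁|x|² − k₀ for all (s,x) ∈ ℝ^{1+N}. -/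

import Mathlib

noncomputable section
open MeasureTheory Real Set Filter ENNReal NNReal Matrix

/-- The Euclidean norm of a vector in `ℝ^N`. -/
def enorm2 {N : ℕ} (x : Fin N → ℝ) : ℝ := Real.sqrt (∑ i, x i ^ 2)

/-- The operator norm of a matrix with respect to the Euclidean norm. -/
def opNorm {N : ℕ} (A : Matrix (Fin N) (Fin N) ℝ) : ℝ :=
  ‖Matrix.toEuclideanCLM (𝕜 := ℝ) A‖

section OUhelpers
variable {N : ℕ}

lemma enorm2_nonneg (x : Fin N → ℝ) : 0 ≤ enorm2 x := Real.sqrt_nonneg _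

lemma enorm2_sq (x : Fin N → ℝ) : enorm2 x ^ 2 = ∑ i, x i ^ 2 :=
  Real.sq_sqrt (Finset.sum_nonneg fun i _ => sq_nonneg _)

lemma enorm2_eq_zero {x : Fin N → ℝ} (h : enorm2 x = 0) : x = 0 := by
  have h2 : ∑ i, x i ^ 2 = 0 := by
    have := enorm2_sq x; rw [h] at this; simpa using this.symm
  funext i
  have := (Finset.sum_eq_zero_iff_of_nonneg (fun j _ => sq_nonneg (x j))).1 h2 i
    (Finset.mem_univ i)
  simpa using pow_eq_zero_iff (n := 2) (by norm_num) |>.1 this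

lemma norm_withLp (x : Fin N → ℝ) : ‖(WithLp.equiv 2 (Fin N → ℝ)).symm x‖ = enorm2 x := by
  rw [EuclideanSpace.norm_eq, enorm2]; congr 1
  exact Finset.sum_congr rfl fun i _ => by simp [sq_abs]

lemma abs_entry_le_enorm2 (x : Fin N → ℝ) (i : Fin N) : |x i| ≤ enorm2 x := by
  rw [enorm2, ← Real.sqrt_sq_eq_abs]
  exact Real.sqrt_le_sqrt (Finset.single_le_sum (f := fun j => x j ^ 2)
    (fun j _ => sq_nonneg _) (Finset.mem_univ i))

lemma dot_le_enorm2 (x y : Fin N → ℝ) : x ⬝ᵥ y ≤ enorm2 x * enorm2 y := by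
  have h := real_inner_le_norm ((WithLp.equiv 2 (Fin N → ℝ)).symm x)
    ((WithLp.equiv 2 (Fin N → ℝ)).symm y)
  rw [norm_withLp, norm_withLp] at h
  refine le_trans (le_of_eq ?_) h
  rw [PiLp.inner_apply]
  simp [dotProduct, RCLike.inner_apply, mul_comm]

lemma opNorm_nonneg (A : Matrix (Fin N) (Fin N) ℝ) : 0 ≤ opNorm A := norm_nonneg _

lemma toEuclideanCLM_equiv_symm (A : Matrix (Fin N) (Fin N) ℝ) (v : Fin N → ℝ) :
    Matrix.toEuclideanCLM (𝕜 := ℝ) A ((WithLp.equiv 2 (Fin N → ℝ)).symm v)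
      = (WithLp.equiv 2 (Fin N → ℝ)).symm (A.mulVec v) := rfl

lemma enorm2_mulVec_le (A : Matrix (Fin N) (Fin N) ℝ) (v : Fin N → ℝ) :
    enorm2 (A.mulVec v) ≤ opNorm A * enorm2 v := by
  have h := (Matrix.toEuclideanCLM (𝕜 := ℝ) A).le_opNorm ((WithLp.equiv 2 (Fin N → ℝ)).symm v)
  rw [toEuclideanCLM_equiv_symm, norm_withLp, norm_withLp] at h
  exact h

lemma opNorm_le_of_mulVec (A : Matrix (Fin N) (Fin N) ℝ) {c : ℝ} (hc : 0 ≤ c)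
    (h : ∀ v, enorm2 (A.mulVec v) ≤ c * enorm2 v) : opNorm A ≤ c := by
  refine ContinuousLinearMap.opNorm_le_bound _ hc fun x => ?_
  rw [← (WithLp.equiv 2 (Fin N → ℝ)).symm_apply_apply x,
    toEuclideanCLM_equiv_symm, norm_withLp, norm_withLp]
  exact h _

open scoped Matrix.Norms.L2Operator in
lemma opNorm_transpose (A : Matrix (Fin N) (Fin N) ℝ) : opNorm Aᵀ = opNorm A := by
  have h : Aᴴ = Aᵀ := by ext i j; simp [Matrix.conjTranspose_apply]
  have h2 := Matrix.l2_opNorm_conjTranspose (𝕜 := ℝ) A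
  rw [h] at h2
  exact h2

open scoped Matrix.Norms.L2Operator in
lemma opNorm_mul_le (A B : Matrix (Fin N) (Fin N) ℝ) : opNorm (A * B) ≤ opNorm A * opNorm B :=
  Matrix.l2_opNorm_mul A B

lemma enorm2_single (j : Fin N) : enorm2 (Pi.single j (1:ℝ)) = 1 := by
  rw [enorm2]
  have h : (∑ i, (Pi.single j (1:ℝ) : Fin N → ℝ) i ^ 2) = 1 := by
    rw [Finset.sum_eq_single j]
    · simp
    · intro b _ hb; simp [Pi.single_apply, hb]
    · intro hb; exact absurd (Finset.mem_univ j) hb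
  rw [h]; exact Real.sqrt_one

lemma abs_entry_le_opNorm (A : Matrix (Fin N) (Fin N) ℝ) (i j : Fin N) :
    |A i j| ≤ opNorm A := by
  have h1 : A.mulVec (Pi.single j 1) i = A i j := by
    simp [Matrix.mulVec_single]
  calc |A i j| = |A.mulVec (Pi.single j 1) i| := by rw [h1]
    _ ≤ enorm2 (A.mulVec (Pi.single j 1)) := abs_entry_le_enorm2 _ i
    _ ≤ opNorm A * enorm2 (Pi.single j 1) := enorm2_mulVec_le _ _
    _ = opNorm A := by rw [enorm2_single, mul_one]

lemma sqrtN_le (hN : (0:ℝ) ≤ N) : Real.sqrt N ≤ N := by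
  rcases Nat.eq_zero_or_pos N with h | h
  · simp [h]
  · have h1 : (1:ℝ) ≤ N := by exact_mod_cast h
    nlinarith [Real.sq_sqrt hN, Real.sqrt_nonneg (N:ℝ)]

lemma enorm2_mulVec_le_entries (A : Matrix (Fin N) (Fin N) ℝ) {c : ℝ} (hc : 0 ≤ c)
    (h : ∀ i j, |A i j| ≤ c) (v : Fin N → ℝ) :
    enorm2 (A.mulVec v) ≤ (N : ℝ)^2 * c * enorm2 v := by
  have key : ∀ i, |A.mulVec v i| ≤ ((N:ℝ) * c) * enorm2 v := by
    intro i
    calc |A.mulVec v i| ≤ ∑ j, |A i j * v j| := by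
          rw [Matrix.mulVec, dotProduct]; exact Finset.abs_sum_le_sum_abs _ _
    _ ≤ ∑ _j : Fin N, c * enorm2 v := by
        refine Finset.sum_le_sum fun j _ => ?_
        rw [abs_mul]
        exact mul_le_mul (h i j) (abs_entry_le_enorm2 v j) (abs_nonneg _) hc
    _ = (N : ℝ) * c * enorm2 v := by
        rw [Finset.sum_const, Finset.card_univ, Fintype.card_fin, nsmul_eq_mul, mul_assoc]
  have hX : 0 ≤ (N:ℝ) * c * enorm2 v := mul_nonneg (mul_nonneg (Nat.cast_nonneg N) hc) (enorm2_nonneg v)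
  rw [enorm2]
  have h2 : ∑ i, A.mulVec v i ^ 2 ≤ (N:ℝ) * ((N:ℝ) * c * enorm2 v)^2 := by
    calc ∑ i, A.mulVec v i ^ 2 ≤ ∑ _i : Fin N, ((N:ℝ) * c * enorm2 v)^2 :=
        Finset.sum_le_sum fun i _ => by
          rw [← sq_abs]; exact pow_le_pow_left₀ (abs_nonneg _) (key i) 2
    _ = (N:ℝ) * ((N:ℝ) * c * enorm2 v)^2 := by
        rw [Finset.sum_const, Finset.card_univ, Fintype.card_fin, nsmul_eq_mul]
  calc Real.sqrt (∑ i, A.mulVec v i ^ 2) ≤ Real.sqrt ((N:ℝ) * ((N:ℝ) * c * enorm2 v)^2) :=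
      Real.sqrt_le_sqrt h2
  _ = Real.sqrt N * ((N:ℝ) * c * enorm2 v) := by
      rw [Real.sqrt_mul (by positivity), Real.sqrt_sq hX]
  _ ≤ (N:ℝ) * ((N:ℝ) * c * enorm2 v) := by
      have := sqrtN_le (N := N) (by positivity)
      exact mul_le_mul_of_nonneg_right this hX
  _ = (N:ℝ)^2 * c * enorm2 v := by ring

lemma opNorm_le_entries (A : Matrix (Fin N) (Fin N) ℝ) {c : ℝ} (hc : 0 ≤ c)
    (h : ∀ i j, |A i j| ≤ c) : opNorm A ≤ (N:ℝ)^2 * c :=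
  opNorm_le_of_mulVec A (by positivity) (enorm2_mulVec_le_entries A hc h)

end OUhelpers
section ODEpart
variable {N : ℕ} (B : ℝ → Matrix (Fin N) (Fin N) ℝ) (U : ℝ → ℝ → Matrix (Fin N) (Fin N) ℝ)

/-- vector-valued solution map -/
def fvec (r : ℝ) (c : Fin N → ℝ) : ℝ → EuclideanSpace ℝ (Fin N) :=
  fun t => (WithLp.equiv 2 (Fin N → ℝ)).symm ((U t r).mulVec c)

lemma fvec_deriv
    (hUderiv : ∀ (r s : ℝ) (i j : Fin N),
      HasDerivAt (fun t => U t r i j) ((B s * U s r) i j) s)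
    (r : ℝ) (c : Fin N → ℝ) (t : ℝ) :
    HasDerivAt (fvec U r c)
      ((WithLp.equiv 2 (Fin N → ℝ)).symm ((B t).mulVec ((U t r).mulVec c))) t := by
  have h1 : HasDerivAt (fun τ => (U τ r).mulVec c) ((B t * U t r).mulVec c) t := by
    rw [hasDerivAt_pi]
    intro i
    have h2 : HasDerivAt (fun τ => ∑ j, U τ r i j * c j)
        (∑ j, (B t * U t r) i j * c j) t :=
      HasDerivAt.fun_sum fun j _ => (hUderiv r t i j).mul_const (c j)
    have e1 : (fun τ => ∑ j, U τ r i j * c j) = fun τ => (U τ r).mulVec c i := by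
      funext τ; simp [Matrix.mulVec, dotProduct]
    have e2 : (∑ j, (B t * U t r) i j * c j) = (B t * U t r).mulVec c i := by
      simp [Matrix.mulVec, dotProduct]
    rw [← e1, ← e2]
    exact h2
  have h3 := (ContinuousLinearMap.hasFDerivAt (x := (U t r).mulVec c)
    ((EuclideanSpace.equiv (Fin N) ℝ).symm : (Fin N → ℝ) →L[ℝ]
      EuclideanSpace ℝ (Fin N))).comp_hasDerivAt t h1
  have e4 : (EuclideanSpace.equiv (Fin N) ℝ).symm ((B t * U t r).mulVec c)
      = (WithLp.equiv 2 (Fin N → ℝ)).symm ((B t).mulVec ((U t r).mulVec c)) := by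
    rw [Matrix.mulVec_mulVec]; rfl
  rw [← e4]
  exact h3
end ODEpart
section ODEpart2
variable {N : ℕ} {B : ℝ → Matrix (Fin N) (Fin N) ℝ} {U : ℝ → ℝ → Matrix (Fin N) (Fin N) ℝ}

lemma lip_aux {CB : ℝ}
    (hBbd : ∀ (s : ℝ) (i j : Fin N), |B s i j| ≤ CB) (hCB : 0 ≤ CB) (t : ℝ) :
    LipschitzWith ((N:ℝ)^2 * CB).toNNReal
      (fun y : EuclideanSpace ℝ (Fin N) =>
        (WithLp.equiv 2 (Fin N → ℝ)).symm
          ((B t).mulVec ((WithLp.equiv 2 (Fin N → ℝ)) y))) := by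
  have hL0 : (0:ℝ) ≤ (N:ℝ)^2 * CB := by positivity
  refine LipschitzWith.of_dist_le_mul fun y₁ y₂ => ?_
  rw [dist_eq_norm, dist_eq_norm]
  set x₁ := (WithLp.equiv 2 (Fin N → ℝ)) y₁
  set x₂ := (WithLp.equiv 2 (Fin N → ℝ)) y₂
  have e1 : (WithLp.equiv 2 (Fin N → ℝ)).symm ((B t).mulVec x₁)
      - (WithLp.equiv 2 (Fin N → ℝ)).symm ((B t).mulVec x₂)
      = (WithLp.equiv 2 (Fin N → ℝ)).symm ((B t).mulVec (x₁ - x₂)) := by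
    rw [Matrix.mulVec_sub, WithLp.equiv_symm_apply, WithLp.toLp_sub]
  have e2 : y₁ - y₂ = (WithLp.equiv 2 (Fin N → ℝ)).symm (x₁ - x₂) := by
    rw [WithLp.equiv_symm_apply, WithLp.toLp_sub]; simp [x₁, x₂]
  rw [e1, e2, norm_withLp, norm_withLp, Real.coe_toNNReal _ hL0]
  exact enorm2_mulVec_le_entries (B t) hCB (hBbd t) (x₁ - x₂)

lemma flow_mul {CB : ℝ}
    (hBbd : ∀ (s : ℝ) (i j : Fin N), |B s i j| ≤ CB) (hCB : 0 ≤ CB)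
    (hU0 : ∀ r, U r r = 1)
    (hUderiv : ∀ (r s : ℝ) (i j : Fin N),
      HasDerivAt (fun t => U t r i j) ((B s * U s r) i j) s) :
    ∀ t ξ r : ℝ, U t ξ * U ξ r = U t r := by
  intro t ξ r
  set v : ℝ → EuclideanSpace ℝ (Fin N) → EuclideanSpace ℝ (Fin N) :=
    fun τ y => (WithLp.equiv 2 (Fin N → ℝ)).symm
      ((B τ).mulVec ((WithLp.equiv 2 (Fin N → ℝ)) y)) with hv
  have hlip : ∀ τ, LipschitzOnWith ((N:ℝ)^2 * CB).toNNReal (v τ) Set.univ :=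
    fun τ => (lip_aux hBbd hCB τ).lipschitzOnWith
  have key : ∀ c : Fin N → ℝ, (U t ξ).mulVec ((U ξ r).mulVec c) = (U t r).mulVec c := by
    intro c
    set f := fvec U ξ ((U ξ r).mulVec c) with hf
    set g := fvec U r c with hg
    have hfd : ∀ τ, HasDerivAt f (v τ (f τ)) τ := by
      intro τ
      have e : v τ (f τ) = (WithLp.equiv 2 (Fin N → ℝ)).symm
          ((B τ).mulVec ((U τ ξ).mulVec ((U ξ r).mulVec c))) := by
        simp only [hv, hf, fvec, Equiv.apply_symm_apply]
      rw [e]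
      exact fvec_deriv B U hUderiv ξ ((U ξ r).mulVec c) τ
    have hgd : ∀ τ, HasDerivAt g (v τ (g τ)) τ := by
      intro τ
      have e : v τ (g τ) = (WithLp.equiv 2 (Fin N → ℝ)).symm
          ((B τ).mulVec ((U τ r).mulVec c)) := by
        simp only [hv, hg, fvec, Equiv.apply_symm_apply]
      rw [e]
      exact fvec_deriv B U hUderiv r c τ
    have heq : f ξ = g ξ := by
      simp only [hf, hg, fvec, hU0, Matrix.one_mulVec]
    set a := min t ξ - 1 with ha
    set b := max t ξ + 1 with hb
    have hξ : ξ ∈ Set.Ioo a b :=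
      ⟨by simp only [ha]; have := min_le_right t ξ; linarith,
       by simp only [hb]; have := le_max_right t ξ; linarith⟩
    have ht : t ∈ Set.Icc a b :=
      ⟨by simp only [ha]; have := min_le_left t ξ; linarith,
       by simp only [hb]; have := le_max_left t ξ; linarith⟩
    have hEq := ODE_solution_unique_of_mem_Icc (v := v) (s := fun _ => Set.univ) (fun τ _ => hlip τ) hξ
      (fun τ _ => ((hfd τ).continuousAt).continuousWithinAt)
      (fun τ _ => hfd τ) (fun _ _ => Set.mem_univ _)
      (fun τ _ => ((hgd τ).continuousAt).continuousWithinAt)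
      (fun τ _ => hgd τ) (fun _ _ => Set.mem_univ _) heq
    have := hEq ht
    simpa [hf, hg, fvec] using (WithLp.equiv 2 (Fin N → ℝ)).symm.injective this
  ext i j
  have h := key (Pi.single j 1)
  rw [Matrix.mulVec_mulVec] at h
  have := congrFun h i
  simpa using this

lemma U_growth {CB : ℝ}
    (hBbd : ∀ (s : ℝ) (i j : Fin N), |B s i j| ≤ CB) (hCB : 0 ≤ CB)
    (hU0 : ∀ r, U r r = 1)
    (hUderiv : ∀ (r s : ℝ) (i j : Fin N),
      HasDerivAt (fun t => U t r i j) ((B s * U s r) i j) s) :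
    ∀ r t : ℝ, r ≤ t → ∀ c : Fin N → ℝ,
      enorm2 ((U t r).mulVec c) ≤ enorm2 c * Real.exp ((N:ℝ)^2 * CB * (t - r)) := by
  intro r t hrt c
  set L : ℝ := (N:ℝ)^2 * CB with hLdef
  have hL0 : 0 ≤ L := by positivity
  set f := fvec U r c with hf
  have hbound := norm_le_gronwallBound_of_norm_deriv_right_le
    (f := f) (f' := fun τ => (WithLp.equiv 2 (Fin N → ℝ)).symm
      ((B τ).mulVec ((U τ r).mulVec c)))
    (δ := enorm2 c) (K := L) (ε := 0) (a := r) (b := t)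
    (Continuous.continuousOn (by
      refine continuous_iff_continuousAt.2 fun τ => (fvec_deriv B U hUderiv r c τ).continuousAt))
    (fun x _ => (fvec_deriv B U hUderiv r c x).hasDerivWithinAt)
    (by
      simp only [hf, fvec, hU0, Matrix.one_mulVec]
      rw [norm_withLp])
    (fun x _ => by
      rw [norm_withLp, add_zero]
      have h2 : ‖f x‖ = enorm2 ((U x r).mulVec c) := by rw [hf]; exact norm_withLp _
      rw [h2]
      exact enorm2_mulVec_le_entries (B x) hCB (hBbd x) _)
  have := hbound t ⟨hrt, le_refl t⟩
  rw [gronwallBound_ε0] at this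
  have h3 : ‖f t‖ = enorm2 ((U t r).mulVec c) := by rw [hf]; exact norm_withLp _
  rw [h3] at this
  exact this

end ODEpart2
section ExpInt

lemma integrableOn_exp_decay (s : ℝ) {b : ℝ} (hb : 0 < b) :
    IntegrableOn (fun ξ => Real.exp (-b * (ξ - s))) (Set.Ioi s) := by
  have h : (fun ξ => Real.exp (-b * (ξ - s))) = fun ξ => Real.exp (b * s) * Real.exp (-b * ξ) := by
    funext ξ; rw [← Real.exp_add]; ring_nf
  rw [h]
  exact (exp_neg_integrableOn_Ioi s hb).const_mul _

lemma integral_exp_decay (s : ℝ) {b : ℝ} (hb : 0 < b) :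
    ∫ ξ in Set.Ioi s, Real.exp (-b * (ξ - s)) = b⁻¹ := by
  have hderiv : ∀ x ∈ Set.Ioi s, HasDerivAt (fun ξ => -b⁻¹ * Real.exp (-b * (ξ - s)))
      (Real.exp (-b * (x - s))) x := by
    intro x _
    have h1 : HasDerivAt (fun ξ : ℝ => -b * (ξ - s)) (-b) x := by
      simpa using ((hasDerivAt_id x).sub_const s).const_mul (-b)
    have h2 := (h1.exp).const_mul (-b⁻¹)
    refine h2.congr_deriv ?_
    have hbb : b * b⁻¹ = 1 := mul_inv_cancel₀ hb.ne'
    linear_combination (Real.exp (-b * (x - s))) * hbb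
  have hcont : ContinuousWithinAt (fun ξ => -b⁻¹ * Real.exp (-b * (ξ - s))) (Set.Ici s) s := by
    apply Continuous.continuousWithinAt
    continuity
  have htend : Tendsto (fun ξ => -b⁻¹ * Real.exp (-b * (ξ - s))) atTop (nhds 0) := by
    have h3 : Tendsto (fun ξ : ℝ => -b * (ξ - s)) atTop atBot := by
      have h4 : Tendsto (fun ξ : ℝ => ξ - s) atTop atTop :=
        tendsto_atTop_add_const_right _ (-s) tendsto_id
      exact h4.const_mul_atTop_of_neg (neg_lt_zero.2 hb)
    have h5 := Real.tendsto_exp_atBot.comp h3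
    have h6 := h5.const_mul (-b⁻¹)
    simpa using h6
  have := integral_Ioi_of_hasDerivAt_of_tendsto hcont hderiv (integrableOn_exp_decay s hb) htend
  rw [this]
  simp

end ExpInt
section ContPart
variable {N : ℕ} {B : ℝ → Matrix (Fin N) (Fin N) ℝ} {U : ℝ → ℝ → Matrix (Fin N) (Fin N) ℝ}

lemma U_cont_snd
    (hflow : ∀ t ξ r : ℝ, U t ξ * U ξ r = U t r)
    (hU0 : ∀ r, U r r = 1)
    (hUderiv : ∀ (r s : ℝ) (i j : Fin N),
      HasDerivAt (fun t => U t r i j) ((B s * U s r) i j) s)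
    (s : ℝ) : Continuous fun ξ => U s ξ := by
  have hUc : Continuous fun ξ => U ξ s :=
    continuous_matrix fun i j => continuous_iff_continuousAt.2 fun τ =>
      (hUderiv s τ i j).continuousAt
  have hinv : ∀ ξ : ℝ, U ξ s * U s ξ = 1 := by
    intro ξ; rw [hflow ξ s ξ, hU0]
  have hdet : ∀ ξ : ℝ, (U ξ s).det ≠ 0 := fun ξ =>
    (Matrix.isUnit_det_of_right_inverse (hinv ξ)).ne_zero
  have hform : (fun ξ => U s ξ) = fun ξ => ((U ξ s).det)⁻¹ • (U ξ s).adjugate := by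
    funext ξ
    have h1 : (U ξ s)⁻¹ = U s ξ := Matrix.inv_eq_right_inv (hinv ξ)
    rw [← h1, Matrix.inv_def, Ring.inverse_eq_inv]
  rw [hform]
  exact (hUc.matrix_det.inv₀ hdet).smul hUc.matrix_adjugate

end ContPart
section CorePart
variable {N : ℕ}

lemma core {Q : ℝ → Matrix (Fin N) (Fin N) ℝ} {U : ℝ → ℝ → Matrix (Fin N) (Fin N) ℝ}
    {Qs : ℝ → Matrix (Fin N) (Fin N) ℝ} {η₀ CQ C₀ ω L : ℝ}
    (hη₀ : 0 < η₀) (hCQ : 0 ≤ CQ) (hC₀ : 0 < C₀) (hω : 0 < ω) (hL : 0 ≤ L)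
    (hQbd : ∀ (s : ℝ) (i j : Fin N), |Q s i j| ≤ CQ)
    (hQcont : ∀ i j, Continuous fun s => Q s i j)
    (hQell : ∀ (s : ℝ) (ξ : Fin N → ℝ),
      η₀ * enorm2 ξ ^ 2 ≤ ∑ i, (Q s).mulVec ξ i * ξ i)
    (hdecay : ∀ r s : ℝ, r ≤ s → opNorm (U r s) ≤ C₀ * Real.exp (-ω * (s - r)))
    (hflow : ∀ t ξ r : ℝ, U t ξ * U ξ r = U t r)
    (hU0 : ∀ r, U r r = 1)
    (hgrow : ∀ r t : ℝ, r ≤ t → ∀ c : Fin N → ℝ,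
      enorm2 ((U t r).mulVec c) ≤ enorm2 c * Real.exp (L * (t - r)))
    (hUcont : ∀ s : ℝ, Continuous fun ξ => U s ξ)
    (hQs : ∀ (s : ℝ) (i j : Fin N),
      Qs s i j = ∫ ξ in Set.Ioi s, (U s ξ * Q ξ * (U s ξ)ᵀ) i j)
    (s : ℝ) :
    (∀ v, η₀ * Real.exp (-L) ^ 2 * enorm2 v ^ 2 ≤ (Qs s).mulVec v ⬝ᵥ v) ∧
    (∀ i j, |Qs s i j| ≤ (N:ℝ)^2 * CQ * C₀^2 * (2*ω)⁻¹) := by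
  set g : ℝ → Matrix (Fin N) (Fin N) ℝ := fun ξ => U s ξ * Q ξ * (U s ξ)ᵀ with hg
  -- operator norm bound on the integrand
  have hQop : ∀ ξ : ℝ, opNorm (Q ξ) ≤ (N:ℝ)^2 * CQ := fun ξ =>
    opNorm_le_entries (Q ξ) hCQ (hQbd ξ)
  have hgop : ∀ ξ ∈ Set.Ioi s, opNorm (g ξ) ≤
      ((N:ℝ)^2 * CQ * C₀^2) * Real.exp (-(2*ω) * (ξ - s)) := by
    intro ξ hξ
    have hξ' : s ≤ ξ := le_of_lt hξ
    have hUb : opNorm (U s ξ) ≤ C₀ * Real.exp (-ω * (ξ - s)) := hdecay s ξ hξ'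
    have hUbn : 0 ≤ C₀ * Real.exp (-ω * (ξ - s)) := by positivity
    have h1 : opNorm (g ξ) ≤ opNorm (U s ξ * Q ξ) * opNorm ((U s ξ)ᵀ) := opNorm_mul_le _ _
    have h2 : opNorm (U s ξ * Q ξ) ≤ opNorm (U s ξ) * opNorm (Q ξ) := opNorm_mul_le _ _
    have h3 : opNorm ((U s ξ)ᵀ) = opNorm (U s ξ) := opNorm_transpose _
    have hexp2 : Real.exp (-(2*ω) * (ξ - s)) = Real.exp (-ω * (ξ - s)) ^ 2 := by
      rw [sq, ← Real.exp_add]; ring_nf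
    calc opNorm (g ξ) ≤ opNorm (U s ξ * Q ξ) * opNorm (U s ξ) := by rw [← h3]; exact h1
      _ ≤ (opNorm (U s ξ) * opNorm (Q ξ)) * opNorm (U s ξ) :=
          mul_le_mul_of_nonneg_right h2 (opNorm_nonneg _)
      _ ≤ ((C₀ * Real.exp (-ω * (ξ - s))) * ((N:ℝ)^2 * CQ)) * (C₀ * Real.exp (-ω * (ξ - s))) := by
          have hQopn : 0 ≤ opNorm (Q ξ) := opNorm_nonneg _
          exact mul_le_mul (mul_le_mul hUb (hQop ξ) hQopn hUbn)
            hUb (opNorm_nonneg _) (by positivity)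
      _ = ((N:ℝ)^2 * CQ * C₀^2) * Real.exp (-(2*ω) * (ξ - s)) := by
          rw [hexp2]; ring
  -- continuity & integrability of the entries
  have hgcont : Continuous g := by
    have hQc : Continuous fun ξ : ℝ => Q ξ := continuous_matrix fun i j => hQcont i j
    exact ((hUcont s).matrix_mul hQc).matrix_mul (hUcont s).matrix_transpose
  have hIntMaj : IntegrableOn
      (fun ξ => ((N:ℝ)^2 * CQ * C₀^2) * Real.exp (-(2*ω) * (ξ - s))) (Set.Ioi s) :=
    (integrableOn_exp_decay s (by positivity : (0:ℝ) < 2*ω)).const_mul _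
  have hIntg : ∀ i j, IntegrableOn (fun ξ => g ξ i j) (Set.Ioi s) := by
    intro i j
    refine Integrable.mono' hIntMaj ?_ ?_
    · exact ((hgcont.matrix_elem i j).aestronglyMeasurable).restrict
    · refine (MeasureTheory.ae_restrict_iff' measurableSet_Ioi).2 (Filter.Eventually.of_forall ?_)
      intro ξ hξ
      rw [Real.norm_eq_abs]
      exact le_trans (abs_entry_le_opNorm _ i j) (hgop ξ hξ)
  constructor
  · -- lower bound for the quadratic form
    intro v
    set h : ℝ → ℝ := fun ξ => (g ξ).mulVec v ⬝ᵥ v with hh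
    have hexpand : ∀ (A : Matrix (Fin N) (Fin N) ℝ),
        A.mulVec v ⬝ᵥ v = ∑ i, ∑ j, A i j * (v j * v i) := by
      intro A
      simp only [dotProduct, Matrix.mulVec, Finset.sum_mul]
      exact Finset.sum_congr rfl fun i _ => Finset.sum_congr rfl fun j _ => by ring
    have hInth : IntegrableOn h (Set.Ioi s) := by
      have : h = fun ξ => ∑ i, ∑ j, g ξ i j * (v j * v i) := by
        funext ξ; simp only [hh]; exact hexpand _
      rw [this]
      exact integrable_finset_sum _ fun i _ =>
        integrable_finset_sum _ fun j _ => (hIntg i j).mul_const _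
    -- quadratic form = integral of h
    have hquad : (Qs s).mulVec v ⬝ᵥ v = ∫ ξ in Set.Ioi s, h ξ := by
      rw [hexpand (Qs s)]
      have e1 : ∀ i j : Fin N, Qs s i j * (v j * v i)
          = ∫ ξ in Set.Ioi s, g ξ i j * (v j * v i) := by
        intro i j
        rw [hQs s i j]
        exact (MeasureTheory.integral_mul_const _ _).symm
      calc ∑ i, ∑ j, Qs s i j * (v j * v i)
          = ∑ i, ∑ j, ∫ ξ in Set.Ioi s, g ξ i j * (v j * v i) :=
            Finset.sum_congr rfl fun i _ => Finset.sum_congr rfl fun j _ => e1 i j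
        _ = ∑ i, ∫ ξ in Set.Ioi s, ∑ j, g ξ i j * (v j * v i) :=
            Finset.sum_congr rfl fun i _ =>
              (MeasureTheory.integral_finset_sum _ fun j _ => (hIntg i j).mul_const _).symm
        _ = ∫ ξ in Set.Ioi s, ∑ i, ∑ j, g ξ i j * (v j * v i) :=
            (MeasureTheory.integral_finset_sum _ fun i _ =>
              integrable_finset_sum _ fun j _ => (hIntg i j).mul_const _).symm
        _ = ∫ ξ in Set.Ioi s, h ξ := by
            refine MeasureTheory.setIntegral_congr_fun measurableSet_Ioi fun ξ _ => ?_
            simp only [hh]; exact (hexpand _).symm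
    -- transformation to the Q-quadratic form
    set w : ℝ → Fin N → ℝ := fun ξ => (U s ξ)ᵀ.mulVec v with hw
    have htr : ∀ ξ : ℝ, h ξ = (Q ξ).mulVec (w ξ) ⬝ᵥ w ξ := by
      intro ξ
      simp only [hh, hg, hw]
      rw [← Matrix.mulVec_mulVec, ← Matrix.mulVec_mulVec]
      rw [dotProduct_comm, Matrix.dotProduct_mulVec, ← Matrix.mulVec_transpose,
        dotProduct_comm]
    have hpos : ∀ ξ : ℝ, 0 ≤ h ξ := by
      intro ξ
      rw [htr ξ]
      refine le_trans ?_ (hQell ξ (w ξ))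
      positivity
    have hrecover : ∀ ξ : ℝ, v = (U ξ s)ᵀ.mulVec (w ξ) := by
      intro ξ
      rw [hw, Matrix.mulVec_mulVec, ← Matrix.transpose_mul, hflow s ξ s, hU0,
        Matrix.transpose_one, Matrix.one_mulVec]
    have hwlow : ∀ ξ ∈ Set.Ioc s (s+1), Real.exp (-L) * enorm2 v ≤ enorm2 (w ξ) := by
      intro ξ hξ
      have hsξ : s ≤ ξ := le_of_lt hξ.1
      have hUop : opNorm (U ξ s) ≤ Real.exp (L * (ξ - s)) :=
        opNorm_le_of_mulVec _ (le_of_lt (Real.exp_pos _))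
          (fun c => by rw [mul_comm]; exact hgrow s ξ hsξ c)
      have h1 : enorm2 v ≤ Real.exp (L * (ξ - s)) * enorm2 (w ξ) := by
        calc enorm2 v = enorm2 ((U ξ s)ᵀ.mulVec (w ξ)) := by rw [← hrecover ξ]
          _ ≤ opNorm ((U ξ s)ᵀ) * enorm2 (w ξ) := enorm2_mulVec_le _ _
          _ = opNorm (U ξ s) * enorm2 (w ξ) := by rw [opNorm_transpose]
          _ ≤ Real.exp (L * (ξ - s)) * enorm2 (w ξ) :=
              mul_le_mul_of_nonneg_right hUop (enorm2_nonneg _)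
      have h2 : Real.exp (L * (ξ - s)) ≤ Real.exp L := by
        apply Real.exp_le_exp.2
        have h3 : ξ - s ≤ 1 := by linarith [hξ.2]
        nlinarith
      have h4 : enorm2 v ≤ Real.exp L * enorm2 (w ξ) :=
        le_trans h1 (mul_le_mul_of_nonneg_right h2 (enorm2_nonneg _))
      have h5 := mul_le_mul_of_nonneg_left h4 (le_of_lt (Real.exp_pos (-L)))
      rw [← mul_assoc, ← Real.exp_add, neg_add_cancel, Real.exp_zero, one_mul] at h5
      exact h5
    -- integral comparison
    set m' : ℝ := η₀ * Real.exp (-L) ^ 2 * enorm2 v ^ 2 with hm'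
    have hstep2 : m' ≤ ∫ ξ in Set.Ioc s (s+1), h ξ := by
      have hconst : ∫ ξ in Set.Ioc s (s+1), m' = m' := by
        rw [MeasureTheory.setIntegral_const, Real.volume_real_Ioc]
        simp
      rw [← hconst]
      refine MeasureTheory.setIntegral_mono_on
        (MeasureTheory.integrableOn_const measure_Ioc_lt_top.ne)
        (hInth.mono_set Set.Ioc_subset_Ioi_self) measurableSet_Ioc ?_
      intro ξ hξ
      rw [htr ξ]
      refine le_trans ?_ (hQell ξ (w ξ))
      rw [hm']
      have h6 := hwlow ξ hξ
      have h7 : (Real.exp (-L) * enorm2 v)^2 ≤ enorm2 (w ξ)^2 := by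
        exact pow_le_pow_left₀ (mul_nonneg (le_of_lt (Real.exp_pos _)) (enorm2_nonneg v)) h6 2
      nlinarith [Real.exp_pos (-L), enorm2_nonneg v, hη₀]
    have hstep1 : (∫ ξ in Set.Ioc s (s+1), h ξ) ≤ ∫ ξ in Set.Ioi s, h ξ :=
      MeasureTheory.setIntegral_mono_set hInth
        (Filter.Eventually.of_forall hpos)
        (HasSubset.Subset.eventuallyLE Set.Ioc_subset_Ioi_self)
    rw [hquad]
    exact le_trans hstep2 hstep1
  · -- entry bound
    intro i j
    rw [hQs s i j]
    have habs : |∫ ξ in Set.Ioi s, g ξ i j| ≤ ∫ ξ in Set.Ioi s, |g ξ i j| := by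
      have := MeasureTheory.norm_integral_le_integral_norm
        (μ := volume.restrict (Set.Ioi s)) (f := fun ξ => g ξ i j)
      simpa [Real.norm_eq_abs] using this
    refine le_trans habs ?_
    have hmono : (∫ ξ in Set.Ioi s, |g ξ i j|)
        ≤ ∫ ξ in Set.Ioi s, ((N:ℝ)^2 * CQ * C₀^2) * Real.exp (-(2*ω) * (ξ - s)) := by
      refine MeasureTheory.setIntegral_mono_on ((hIntg i j).abs) hIntMaj measurableSet_Ioi ?_
      intro ξ hξ
      exact le_trans (abs_entry_le_opNorm _ i j) (hgop ξ hξ)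
    refine le_trans hmono ?_
    rw [MeasureTheory.integral_const_mul, integral_exp_decay s (by positivity : (0:ℝ) < 2*ω)]
end CorePart

/-- lower bound for the potential `V_O` arising from the transformed
parabolic Ornstein-Uhlenbeck operator: `V_O(s,x) ≥ k₁|x|² − k₀`. -/
theorem statement2 (N : ℕ) (hN : 1 ≤ N) (p : ℝ) (hp : 1 < p)
    (Q B : ℝ → Matrix (Fin N) (Fin N) ℝ)
    (hQreg : ∀ i j, ContDiff ℝ 1 fun s => Q s i j)
    (hQbd : ∃ C : ℝ, ∀ (s : ℝ) (i j : Fin N),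
      |Q s i j| ≤ C ∧ |deriv (fun t => Q t i j) s| ≤ C)
    (hBcont : ∀ i j, Continuous fun s => B s i j)
    (hBbd : ∃ C : ℝ, ∀ (s : ℝ) (i j : Fin N), |B s i j| ≤ C)
    (hQsym : ∀ s, (Q s)ᵀ = Q s)
    (η₀ : ℝ) (hη₀ : 0 < η₀)
    (hQell : ∀ (s : ℝ) (ξ : Fin N → ℝ),
      η₀ * enorm2 ξ ^ 2 ≤ ∑ i, (Q s).mulVec ξ i * ξ i)
    (U : ℝ → ℝ → Matrix (Fin N) (Fin N) ℝ)
    (hU0 : ∀ r, U r r = 1)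
    (hUderiv : ∀ (r s : ℝ) (i j : Fin N),
      HasDerivAt (fun t => U t r i j) ((B s * U s r) i j) s)
    (C₀ ω : ℝ) (hC₀ : 0 < C₀) (hω : 0 < ω)
    (hdecay : ∀ r s : ℝ, r ≤ s → opNorm (U r s) ≤ C₀ * Real.exp (-ω * (s - r)))
    (Qs : ℝ → Matrix (Fin N) (Fin N) ℝ)
    (hQs : ∀ (s : ℝ) (i j : Fin N),
      Qs s i j = ∫ ξ in Set.Ioi s, (U s ξ * Q ξ * (U s ξ)ᵀ) i j)
    :
    ∃ k₁ : ℝ, 0 < k₁ ∧ ∃ k₀ : ℝ, 0 ≤ k₀ ∧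
      ∀ (s : ℝ) (x : Fin N → ℝ),
        k₁ * enorm2 x ^ 2 - k₀ ≤
          (1 / (2 * p)) * (1 - 1 / p) *
              (∑ i, (Q s).mulVec ((Qs s)⁻¹.mulVec x) i * ((Qs s)⁻¹.mulVec x) i)
            - (1 / (2 * p)) * Matrix.trace (Q s * (Qs s)⁻¹) := by
  obtain ⟨CQ, hQbd'⟩ := hQbd
  obtain ⟨CB, hBbd'⟩ := hBbd
  have i0 : Fin N := ⟨0, hN⟩
  have hCQnn : 0 ≤ CQ := le_trans (abs_nonneg _) (hQbd' 0 i0 i0).1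
  have hCBnn : 0 ≤ CB := le_trans (abs_nonneg _) (hBbd' 0 i0 i0)
  have hQbd2 : ∀ (s : ℝ) (i j : Fin N), |Q s i j| ≤ CQ := fun s i j => (hQbd' s i j).1
  have hQc : ∀ i j, Continuous fun s => Q s i j := fun i j => (hQreg i j).continuous
  set L : ℝ := (N:ℝ)^2 * CB with hLdef
  have hL : 0 ≤ L := by positivity
  have hflow : ∀ t ξ r : ℝ, U t ξ * U ξ r = U t r := flow_mul hBbd' hCBnn hU0 hUderiv
  have hgrow : ∀ r t : ℝ, r ≤ t → ∀ c : Fin N → ℝ,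
      enorm2 ((U t r).mulVec c) ≤ enorm2 c * Real.exp (L * (t - r)) :=
    U_growth hBbd' hCBnn hU0 hUderiv
  have hUcont : ∀ s : ℝ, Continuous fun ξ => U s ξ := fun s =>
    U_cont_snd hflow hU0 hUderiv s
  have hcore := core hη₀ hCQnn hC₀ hω hL hQbd2 hQc hQell hdecay hflow hU0 hgrow hUcont hQs
  set m : ℝ := η₀ * Real.exp (-L) ^ 2 with hmdef
  have hm0 : 0 < m := by positivity
  set MQ : ℝ := (N:ℝ)^2 * ((N:ℝ)^2 * CQ * C₀^2 * (2*ω)⁻¹) with hMQdef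
  have hMQ : ∀ s : ℝ, opNorm (Qs s) ≤ MQ := by
    intro s
    have h := opNorm_le_entries (Qs s) (by positivity) ((hcore s).2)
    exact h
  have hMQ0 : 0 ≤ MQ := le_trans (opNorm_nonneg (Qs 0)) (hMQ 0)
  have hp0 : 0 < p := lt_trans one_pos hp
  have hc₂ : 0 < 1 / (2*p) := by positivity
  have hc₁ : 0 < (1 / (2*p)) * (1 - 1/p) :=
    mul_pos hc₂ (sub_pos.2 ((div_lt_one hp0).2 hp))
  refine ⟨(1 / (2*p)) * (1 - 1/p) * η₀ / (MQ+1)^2, by positivity,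
    (1 / (2*p)) * ((N:ℝ)^2 * (CQ * m⁻¹)), by positivity, ?_⟩
  intro s x
  have hlow := (hcore s).1
  -- invertibility of Qs s
  have hinj : Function.Injective (Qs s).mulVec := by
    intro a b hab
    have h0 : (Qs s).mulVec (a - b) = 0 := by rw [Matrix.mulVec_sub, hab, sub_self]
    have h1 := hlow (a - b)
    rw [h0, zero_dotProduct] at h1
    have h2 : enorm2 (a - b) = 0 := by
      by_contra hne
      have hpos : 0 < enorm2 (a - b) := lt_of_le_of_ne (enorm2_nonneg _) (Ne.symm hne)
      nlinarith [mul_pos hm0 (pow_pos hpos 2)]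
    have h3 := enorm2_eq_zero h2
    exact sub_eq_zero.1 h3
  have hdet : IsUnit (Qs s).det :=
    (Matrix.isUnit_iff_isUnit_det _).1 (Matrix.mulVec_injective_iff_isUnit.1 hinj)
  have hQmul : Qs s * (Qs s)⁻¹ = 1 := Matrix.mul_nonsing_inv _ hdet
  set y := (Qs s)⁻¹.mulVec x with hy
  have hxeq : (Qs s).mulVec y = x := by
    rw [hy, Matrix.mulVec_mulVec, hQmul, Matrix.one_mulVec]
  have hxy : enorm2 x ≤ (MQ+1) * enorm2 y := by
    rw [← hxeq]
    refine le_trans (enorm2_mulVec_le _ _) ?_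
    exact mul_le_mul_of_nonneg_right (le_trans (hMQ s) (by linarith)) (enorm2_nonneg _)
  have hy2 : enorm2 x ^ 2 ≤ (MQ+1)^2 * enorm2 y ^ 2 := by
    have h := pow_le_pow_left₀ (enorm2_nonneg x) hxy 2
    rw [mul_pow] at h
    exact h
  have hS : η₀ * enorm2 y ^ 2 ≤ ∑ i, (Q s).mulVec y i * y i := hQell s y
  -- bound on inverse
  have hinvb : opNorm ((Qs s)⁻¹) ≤ m⁻¹ := by
    refine opNorm_le_of_mulVec _ (le_of_lt (inv_pos.2 hm0)) fun u => ?_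
    set z := (Qs s)⁻¹.mulVec u with hz
    have hzu : (Qs s).mulVec z = u := by
      rw [hz, Matrix.mulVec_mulVec, hQmul, Matrix.one_mulVec]
    have h1 : m * enorm2 z ^ 2 ≤ enorm2 u * enorm2 z := by
      refine le_trans (hlow z) ?_
      calc (Qs s).mulVec z ⬝ᵥ z ≤ enorm2 ((Qs s).mulVec z) * enorm2 z := dot_le_enorm2 _ _
        _ = enorm2 u * enorm2 z := by rw [hzu]
    rcases eq_or_ne (enorm2 z) 0 with hz0 | hz0
    · rw [hz0]
      exact mul_nonneg (le_of_lt (inv_pos.2 hm0)) (enorm2_nonneg u)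
    · have hzpos : 0 < enorm2 z := lt_of_le_of_ne (enorm2_nonneg z) (Ne.symm hz0)
      have h3 : m * enorm2 z ≤ enorm2 u := by nlinarith
      calc enorm2 z = m⁻¹ * (m * enorm2 z) := by
            rw [← mul_assoc, inv_mul_cancel₀ (ne_of_gt hm0), one_mul]
        _ ≤ m⁻¹ * enorm2 u := mul_le_mul_of_nonneg_left h3 (le_of_lt (inv_pos.2 hm0))
  -- trace bound
  have hTr : Matrix.trace (Q s * (Qs s)⁻¹) ≤ (N:ℝ)^2 * (CQ * m⁻¹) := by
    have hentry : ∀ k i : Fin N, |(Qs s)⁻¹ k i| ≤ m⁻¹ := fun k i =>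
      le_trans (abs_entry_le_opNorm _ k i) hinvb
    have e1 : Matrix.trace (Q s * (Qs s)⁻¹) = ∑ i, ∑ k, Q s i k * (Qs s)⁻¹ k i := by
      simp [Matrix.trace, Matrix.diag, Matrix.mul_apply]
    rw [e1]
    calc ∑ i, ∑ k, Q s i k * (Qs s)⁻¹ k i
        ≤ ∑ i : Fin N, ∑ k : Fin N, CQ * m⁻¹ := by
          refine Finset.sum_le_sum fun i _ => Finset.sum_le_sum fun k _ => ?_
          calc Q s i k * (Qs s)⁻¹ k i ≤ |Q s i k * (Qs s)⁻¹ k i| := le_abs_self _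
            _ = |Q s i k| * |(Qs s)⁻¹ k i| := abs_mul _ _
            _ ≤ CQ * m⁻¹ := mul_le_mul (hQbd2 s i k) (hentry k i) (abs_nonneg _) hCQnn
      _ = (N:ℝ)^2 * (CQ * m⁻¹) := by
          rw [Finset.sum_const, Finset.sum_const, Finset.card_univ, Fintype.card_fin,
            nsmul_eq_mul, nsmul_eq_mul]
          ring
  -- final assembly
  have hMQ1 : (0:ℝ) < (MQ+1)^2 := by positivity
  have ha : enorm2 x ^ 2 / (MQ+1)^2 ≤ enorm2 y ^ 2 := (div_le_iff₀ hMQ1).2 (by linarith)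
  have hchain : (1 / (2*p)) * (1 - 1/p) * η₀ / (MQ+1)^2 * enorm2 x ^ 2
      ≤ (1 / (2*p)) * (1 - 1/p) * (∑ i, (Q s).mulVec y i * y i) := by
    have e2 : (1 / (2*p)) * (1 - 1/p) * η₀ / (MQ+1)^2 * enorm2 x ^ 2
        = ((1 / (2*p)) * (1 - 1/p)) * (η₀ * (enorm2 x ^ 2 / (MQ+1)^2)) := by ring
    rw [e2]
    refine mul_le_mul_of_nonneg_left ?_ (le_of_lt hc₁)
    refine le_trans ?_ hS
    exact mul_le_mul_of_nonneg_left ha (le_of_lt hη₀)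
  have htr2 : (1 / (2*p)) * Matrix.trace (Q s * (Qs s)⁻¹)
      ≤ (1 / (2*p)) * ((N:ℝ)^2 * (CQ * m⁻¹)) :=
    mul_le_mul_of_nonneg_left hTr (le_of_lt hc₂)
  linarith
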